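/- For every u : Ω → ℝ (Ω identified with (ℤ/Nℤ)², so that all index arithmetic below is modulo N), Σ_{k∈Ω} |u[k+e₁] − u[k]| + Σ_{k∈Ω} |u[k+e₂] − u[k]| ≤ 6·Σ_{α∈B} √(binom(r,α₁)·binom(r,α₂)) · Σ_{k∈Ω} |(a_α[−·] ⊛ u)[k]|, where e₁ = (1,0), e₂ = (0,1). In particular the discrete total variation ‖∇u‖₁ (which omits the wrap-around differences) is bounded by the right-hand side. -/

import Mathlib

noncomputable section

open scoped BigOperators

namespace WFrame

/-- convolution of finitely supported sequences on an additive group -/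
def fconv {G : Type*} [AddZeroClass G] (f g : G →₀ ℝ) : G →₀ ℝ :=
  f.sum fun a c => g.sum fun b d => Finsupp.single (a + b) (c * d)

/-- convolution power; `fpow f 0` is the Dirac delta at 0 -/
def fpow {G : Type*} [AddZeroClass G] (f : G →₀ ℝ) : ℕ → (G →₀ ℝ)
  | 0 => Finsupp.single 0 1
  | n + 1 => fconv (fpow f n) f

/-- the 1st order average filter p = δ₀ + δ₁ -/
def pF : ℤ →₀ ℝ := Finsupp.single 0 1 + Finsupp.single 1 1

/-- the 1st order difference filter q = δ₀ − δ₁ -/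
def qF : ℤ →₀ ℝ := Finsupp.single 0 1 - Finsupp.single 1 1

/-- j_r = 1 if r odd, 0 if r even -/
def jr (r : ℕ) : ℤ := if r % 2 = 1 then 1 else 0

/-- univariate B-spline UEP filter `a_α`; `aF r α k = aα[k]`.
`Finsupp.mapDomain (· + jr r)` shifts the sequence so that its value at `k` is the
value of the original sequence at `k - jr r`. -/
def aF (r α : ℕ) : ℤ →₀ ℝ :=
  if α = 0 then ((2:ℝ) ^ (-(r:ℤ))) • Finsupp.mapDomain (· + jr r) (fpow pF r)
  else ((-1:ℝ) ^ (α + 1) * (2:ℝ) ^ (-(r:ℤ)) * Real.sqrt (r.choose α)) •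
    Finsupp.mapDomain (· + jr r) (fconv (fpow pF (r - α)) (fpow qF α))

/-- tensor product of two finitely supported sequences -/
def tens2 (f g : ℤ →₀ ℝ) : (ℤ × ℤ) →₀ ℝ :=
  Finsupp.onFinset (f.support ×ˢ g.support) (fun k => f k.1 * g k.2) (fun k hk => by
    simp only [Finset.mem_product, Finsupp.mem_support_iff]
    exact ⟨left_ne_zero_of_mul hk, right_ne_zero_of_mul hk⟩)

/-- tensor product filter `a_{(α₁,α₂)}[(k₁,k₂)] = a_{α₁}[k₁]·a_{α₂}[k₂]` -/
def a2 (r : ℕ) (α : ℕ × ℕ) : (ℤ × ℤ) →₀ ℝ := tens2 (aF r α.1) (aF r α.2)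

/-- the band set B = {0,…,r}² \ {(0,0)} -/
def Band (r : ℕ) : Finset (ℕ × ℕ) :=
  (Finset.range (r + 1) ×ˢ Finset.range (r + 1)).erase (0, 0)

/-- upsampling: `upSample l a` equals `a[k/2^l]` on `2^l ℤ²` and `0` elsewhere -/
def upSample (l : ℕ) (a : (ℤ × ℤ) →₀ ℝ) : (ℤ × ℤ) →₀ ℝ :=
  Finsupp.mapDomain (fun k => ((2 ^ l : ℤ) * k.1, (2 ^ l : ℤ) * k.2)) a

/-- `lowChain r l = ã_{l−1,(0,0)} ∗ ⋯ ∗ ã_{0,(0,0)}` (Dirac delta for `l = 0`) -/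
def lowChain (r : ℕ) : ℕ → ((ℤ × ℤ) →₀ ℝ)
  | 0 => Finsupp.single 0 1
  | l + 1 => fconv (upSample l (a2 r (0, 0))) (lowChain r l)

/-- multi-level filter `a_{l,α} = ã_{l,α} ∗ ã_{l−1,(0,0)} ∗ ⋯ ∗ ã_{0,(0,0)}` -/
def aLvl (r l : ℕ) (α : ℕ × ℕ) : (ℤ × ℤ) →₀ ℝ :=
  fconv (upSample l (a2 r α)) (lowChain r l)

/-- periodization `P_N(a)` of a finitely supported sequence on ℤ², as a function on
(ℤ/Nℤ)²: `per N a k = Σ_{m ≡ k (mod N)} a[m]`. -/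
def per (N : ℕ) (a : (ℤ × ℤ) →₀ ℝ) (k : ZMod N × ZMod N) : ℝ :=
  ∑ m ∈ a.support, if ((m.1 : ZMod N), (m.2 : ZMod N)) = k then a m else 0

/-- periodic convolution `(a ⊛ u)[k] = Σ_{n∈Ω} P_N(a)[k−n]·u[n]` -/
def pconv (N : ℕ) [NeZero N] (a : (ℤ × ℤ) →₀ ℝ) (u : ZMod N × ZMod N → ℝ)
    (k : ZMod N × ZMod N) : ℝ :=
  ∑ n : ZMod N × ZMod N, per N a (k - n) * u n

/-- reflection `a[−·]` -/
def refl2 (a : (ℤ × ℤ) →₀ ℝ) : (ℤ × ℤ) →₀ ℝ := Finsupp.mapDomain (fun k => -k) a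

/-- wavelet frame coefficients `W_{l,α}u = a_{l,α}[−·] ⊛ u` -/
def Wc (r N : ℕ) [NeZero N] (l : ℕ) (α : ℕ × ℕ) (u : ZMod N × ZMod N → ℝ) :
    ZMod N × ZMod N → ℝ :=
  pconv N (refl2 (aLvl r l α)) u

/-- `‖Wu‖₁` -/
def wnorm1 (r N L : ℕ) [NeZero N] (u : ZMod N × ZMod N → ℝ) : ℝ :=
  ∑ k : ZMod N × ZMod N, ∑ l ∈ Finset.range L, ∑ α ∈ Band r, |Wc r N l α u k|

/-- weighted norm `‖λ·Wu‖₁` -/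
def wnormW (r N L : ℕ) [NeZero N] (lam : ℕ → ℕ × ℕ → ZMod N × ZMod N → ℝ)
    (u : ZMod N × ZMod N → ℝ) : ℝ :=
  ∑ k : ZMod N × ZMod N, ∑ l ∈ Finset.range L, ∑ α ∈ Band r,
    lam l α k * |Wc r N l α u k|

/-- discrete total variation (no wrap-around) on the grid {0,…,N−1}² -/
def tv (N : ℕ) [NeZero N] (u : ZMod N × ZMod N → ℝ) : ℝ :=
  (∑ i ∈ Finset.range (N - 1), ∑ j ∈ Finset.range N,
      |u ((i : ZMod N) + 1, (j : ZMod N)) - u ((i : ZMod N), (j : ZMod N))|) +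
  (∑ i ∈ Finset.range N, ∑ j ∈ Finset.range (N - 1),
      |u ((i : ZMod N), (j : ZMod N) + 1) - u ((i : ZMod N), (j : ZMod N))|)

/-- covering number of `S` by closed ℓ∞-balls of radius `t` with centers in `[0,Mb]^Ω` -/
def coverNum {X : Type*} (Mb t : ℝ) (S : Set (X → ℝ)) : ℕ :=
  sInf {K : ℕ | ∃ v : Fin K → X → ℝ, (∀ j x, v j x ∈ Set.Icc 0 Mb) ∧
    ∀ u ∈ S, ∃ j, ∀ x, |u x - v j x| ≤ t}

open scoped Classical in
/-- probability of an event under i.i.d. uniform sampling of `m` points from a finite set -/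
def prob {X : Type*} [Fintype X] {m : ℕ} (E : Set (Fin m → X)) : ℝ :=
  (∑ z : Fin m → X, if z ∈ E then (1:ℝ) else 0) / (Fintype.card X : ℝ) ^ m

end WFrame

namespace WFrame

lemma fconv_eq {G : Type*} [AddMonoid G] (f g : AddMonoidAlgebra ℝ G) :
    fconv f.coeff g.coeff = (f * g).coeff := by
  rw [AddMonoidAlgebra.mul_def, AddMonoidAlgebra.coeff_finsuppSum]
  simp only [AddMonoidAlgebra.coeff_finsuppSum, AddMonoidAlgebra.coeff_single]
  rfl
lemma fpow_eq {G : Type*} [AddMonoid G] (f : AddMonoidAlgebra ℝ G) (n : ℕ) :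
    fpow f.coeff n = (f ^ n).coeff := by
  induction n with
  | zero => rw [pow_zero, AddMonoidAlgebra.one_def]; rfl
  | succ n ih => rw [pow_succ, ← fconv_eq, ← ih]; rfl
lemma mul_single_one {G : Type*} [AddCommMonoid G] (f : AddMonoidAlgebra ℝ G) (t : G) :
    (f * AddMonoidAlgebra.single t 1).coeff = Finsupp.mapDomain (· + t) f.coeff := by
  rw [AddMonoidAlgebra.mul_def, AddMonoidAlgebra.coeff_finsuppSum, Finsupp.mapDomain]
  refine Finsupp.sum_congr fun a _ => ?_
  simp

abbrev R1 := AddMonoidAlgebra ℝ ℤ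
abbrev R2 := AddMonoidAlgebra ℝ (ℤ × ℤ)

def P : R1 := AddMonoidAlgebra.ofCoeff pF
def Q : R1 := AddMonoidAlgebra.ofCoeff qF

lemma pq_sum : P + Q = 2 := by
  have h1 : (2 : R1) = AddMonoidAlgebra.single 0 1 + AddMonoidAlgebra.single 0 1 := by
    rw [← AddMonoidAlgebra.one_def]; norm_num
  rw [h1, P, Q, pF, qF]
  simp only [AddMonoidAlgebra.ofCoeff_add, AddMonoidAlgebra.ofCoeff_sub,
    AddMonoidAlgebra.ofCoeff_single]
  abel

/-- the scalar coefficient of `aF` -/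
def cc (r γ : ℕ) : ℝ :=
  if γ = 0 then (2:ℝ) ^ (-(r:ℤ))
  else (-1:ℝ) ^ (γ + 1) * (2:ℝ) ^ (-(r:ℤ)) * Real.sqrt (r.choose γ)

lemma abs_cc (r γ : ℕ) : |cc r γ| = (2:ℝ) ^ (-(r:ℤ)) * Real.sqrt (r.choose γ) := by
  rcases eq_or_ne γ 0 with h | h
  · subst h
    simp [cc, abs_of_nonneg (by positivity : (0:ℝ) ≤ (2:ℝ)^(-(r:ℤ)))]
  · rw [cc, if_neg h, abs_mul, abs_mul, abs_pow, abs_neg, abs_one, one_pow, one_mul,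
      abs_of_nonneg (by positivity : (0:ℝ) ≤ (2:ℝ)^(-(r:ℤ))),
      abs_of_nonneg (Real.sqrt_nonneg _)]

lemma aF_eq (r γ : ℕ) :
    aF r γ = (cc r γ • ((P ^ (r - γ) * Q ^ γ) * AddMonoidAlgebra.single (jr r) 1)).coeff := by
  rcases eq_or_ne γ 0 with h | h
  · subst h
    rw [aF, if_pos rfl, cc, if_pos rfl, AddMonoidAlgebra.coeff_smul, mul_single_one]
    simp [P, ← fpow_eq, AddMonoidAlgebra.coeff_ofCoeff]
  · rw [aF, if_neg h, cc, if_neg h, AddMonoidAlgebra.coeff_smul, mul_single_one, ← fconv_eq,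
      ← fpow_eq, ← fpow_eq]
    rfl

def emb1 : R1 →+* R2 := AddMonoidAlgebra.mapDomainRingHom ℝ (AddMonoidHom.inl ℤ ℤ)
def emb2 : R1 →+* R2 := AddMonoidAlgebra.mapDomainRingHom ℝ (AddMonoidHom.inr ℤ ℤ)

lemma emb1_apply (f : R1) : (emb1 f).coeff = Finsupp.mapDomain (fun a => ((a, 0) : ℤ × ℤ)) f.coeff := rfl
lemma emb2_apply (f : R1) : (emb2 f).coeff = Finsupp.mapDomain (fun a => (((0 : ℤ), a) : ℤ × ℤ)) f.coeff := rfl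

lemma emb1_single (a : ℤ) (c : ℝ) :
    emb1 (AddMonoidAlgebra.single a c) = AddMonoidAlgebra.single (a, 0) c := by
  rw [← AddMonoidAlgebra.coeff_inj, emb1_apply]; exact Finsupp.mapDomain_single

lemma emb2_single (a : ℤ) (c : ℝ) :
    emb2 (AddMonoidAlgebra.single a c) = AddMonoidAlgebra.single (0, a) c := by
  rw [← AddMonoidAlgebra.coeff_inj, emb2_apply]; exact Finsupp.mapDomain_single

lemma emb1_smul (c : ℝ) (f : R1) : emb1 (c • f) = c • emb1 f := by
  rw [← AddMonoidAlgebra.coeff_inj, AddMonoidAlgebra.coeff_smul, emb1_apply, emb1_apply,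
    AddMonoidAlgebra.coeff_smul]; exact Finsupp.mapDomain_smul c f.coeff

lemma emb2_smul (c : ℝ) (f : R1) : emb2 (c • f) = c • emb2 f := by
  rw [← AddMonoidAlgebra.coeff_inj, AddMonoidAlgebra.coeff_smul, emb2_apply, emb2_apply,
    AddMonoidAlgebra.coeff_smul]; exact Finsupp.mapDomain_smul c f.coeff

lemma tens2_apply (f g : ℤ →₀ ℝ) (k : ℤ × ℤ) : tens2 f g k = f k.1 * g k.2 := rfl

lemma tens2_single (a b : ℤ) (c d : ℝ) :
    tens2 (Finsupp.single a c) (Finsupp.single b d) = Finsupp.single (a, b) (c * d) := by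
  ext k
  obtain ⟨k1, k2⟩ := k
  rw [tens2_apply]
  rcases eq_or_ne a k1 with h1 | h1
  · rcases eq_or_ne b k2 with h2 | h2
    · subst h1; subst h2
      rw [Finsupp.single_eq_same, Finsupp.single_eq_same, Finsupp.single_eq_same]
    · rw [Finsupp.single_eq_of_ne' h2, mul_zero,
        Finsupp.single_eq_of_ne' (fun hh => h2 (congrArg Prod.snd hh)), ]
  · rw [Finsupp.single_eq_of_ne' h1, zero_mul,
      Finsupp.single_eq_of_ne' (fun hh => h1 (congrArg Prod.fst hh))]

lemma tens2_eq (f g : R1) : tens2 f.coeff g.coeff = (emb1 f * emb2 g).coeff := by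
  induction f using AddMonoidAlgebra.induction_linear with
  | zero => ext k; rw [tens2_apply]; simp
  | add f f' hf hf' =>
      have h : tens2 (f + f').coeff g.coeff = tens2 f.coeff g.coeff + tens2 f'.coeff g.coeff := by
        ext k; rw [Finsupp.add_apply, tens2_apply, tens2_apply, tens2_apply,
          AddMonoidAlgebra.coeff_add, Finsupp.add_apply, add_mul]
      rw [h, hf, hf', map_add, add_mul, AddMonoidAlgebra.coeff_add]
  | single a c =>
      induction g using AddMonoidAlgebra.induction_linear with
      | zero => ext k; rw [tens2_apply]; simp
      | add g g' hg hg' =>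
          have h : tens2 (AddMonoidAlgebra.single a c).coeff (g + g').coeff
              = tens2 (AddMonoidAlgebra.single a c).coeff g.coeff
                + tens2 (AddMonoidAlgebra.single a c).coeff g'.coeff := by
            ext k; rw [Finsupp.add_apply, tens2_apply, tens2_apply, tens2_apply,
              AddMonoidAlgebra.coeff_add, Finsupp.add_apply, mul_add]
          rw [h, hg, hg', map_add, mul_add, AddMonoidAlgebra.coeff_add]
      | single b d =>
          rw [AddMonoidAlgebra.coeff_single, AddMonoidAlgebra.coeff_single, tens2_single,
            emb1_single, emb2_single, AddMonoidAlgebra.single_mul_single,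
            show ((a,(0:ℤ)) + ((0:ℤ),b)) = (a,b) by simp, AddMonoidAlgebra.coeff_single]

/-- the basic unnormalized band filters on ℤ² -/
def E (r α β : ℕ) : R2 := emb1 (P ^ (r - α) * Q ^ α) * emb2 (P ^ (r - β) * Q ^ β)

lemma a2_eq (r α β : ℕ) :
    a2 r (α, β) = ((cc r α * cc r β) • (E r α β * AddMonoidAlgebra.single (jr r, jr r) 1)).coeff := by
  show tens2 (aF r α) (aF r β) = _
  rw [aF_eq, aF_eq, tens2_eq, emb1_smul, emb2_smul, smul_mul_smul_comm]
  congr 2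
  rw [RingHom.map_mul emb1 (P ^ (r - α) * Q ^ α) (AddMonoidAlgebra.single (jr r) 1),
    RingHom.map_mul emb2 (P ^ (r - β) * Q ^ β) (AddMonoidAlgebra.single (jr r) 1),
    emb1_single, emb2_single, E, mul_mul_mul_comm, AddMonoidAlgebra.single_mul_single, one_mul,
    show ((jr r, (0:ℤ)) + ((0:ℤ), jr r)) = (jr r, jr r) by simp]

lemma natCast_mul_eq_smul {A : Type*} [Semiring A] [Algebra ℝ A] (n : ℕ) (z : A) :
    (n : A) * z = (n : ℝ) • z := by
  rw [← nsmul_eq_mul, ← Nat.cast_smul_eq_nsmul ℝ]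

lemma hb1 (r : ℕ) (hr : 1 ≤ r) :
    ((2:ℝ) ^ (r - 1)) • Q
      = ∑ α ∈ Finset.range r, ((r-1).choose α : ℝ) • (P ^ (r - (α+1)) * Q ^ (α+1)) := by
  have h2 : (2:R1) ^ (r-1) = ((2^(r-1) : ℕ) : R1) := by push_cast; ring
  have hL : ((2:ℝ) ^ (r - 1)) • Q = Q * (2:R1) ^ (r-1) := by
    rw [h2, mul_comm, natCast_mul_eq_smul]
    push_cast; ring_nf
  rw [hL, ← pq_sum, add_comm P Q, add_pow,
    show r - 1 + 1 = r from Nat.succ_pred_eq_of_pos hr, Finset.mul_sum]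
  refine Finset.sum_congr rfl fun α _ => ?_
  rw [← natCast_mul_eq_smul, show r - 1 - α = r - (α + 1) by omega]
  ring

lemma hb2 (r : ℕ) :
    ((2:ℝ) ^ r) • (1:R1)
      = ∑ β ∈ Finset.range (r+1), (r.choose β : ℝ) • (P ^ (r - β) * Q ^ β) := by
  have h2 : (2:R1) ^ r = ((2^r : ℕ) : R1) := by push_cast; ring
  have hL : ((2:ℝ) ^ r) • (1:R1) = (2:R1) ^ r := by
    rw [h2, ← mul_one (((2^r : ℕ) : R1)), natCast_mul_eq_smul]
    push_cast; ring_nf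
  rw [hL, ← pq_sum, add_comm P Q, add_pow]
  refine Finset.sum_congr rfl fun β _ => ?_
  rw [← natCast_mul_eq_smul]
  ring

lemma ident1 (r : ℕ) (hr : 1 ≤ r) :
    ((2:ℝ) ^ (2*r - 1)) • emb1 Q
      = ∑ α ∈ Finset.range r, ∑ β ∈ Finset.range (r+1),
          (((r-1).choose α : ℝ) * (r.choose β : ℝ)) • E r (α+1) β := by
  have e1 : ((2:ℝ) ^ (r - 1)) • emb1 Q
      = ∑ α ∈ Finset.range r, ((r-1).choose α : ℝ) • emb1 (P ^ (r - (α+1)) * Q ^ (α+1)) := by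
    rw [← emb1_smul, hb1 r hr, map_sum]
    exact Finset.sum_congr rfl fun α _ => emb1_smul _ _
  have e2 : ((2:ℝ) ^ r) • (1:R2)
      = ∑ β ∈ Finset.range (r+1), (r.choose β : ℝ) • emb2 (P ^ (r - β) * Q ^ β) := by
    have := congrArg emb2 (hb2 r)
    rw [emb2_smul, map_one, map_sum] at this
    rw [this]
    exact Finset.sum_congr rfl fun β _ => emb2_smul _ _
  have key := congrArg₂ (· * ·) e1 e2
  simp only [smul_mul_smul_comm, mul_one] at key
  rw [← pow_add, show r - 1 + r = 2*r - 1 by omega] at key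
  rw [key, Finset.sum_mul_sum]
  refine Finset.sum_congr rfl fun α _ => Finset.sum_congr rfl fun β _ => ?_
  rw [smul_mul_smul_comm, E]

lemma ident2 (r : ℕ) (hr : 1 ≤ r) :
    ((2:ℝ) ^ (2*r - 1)) • emb2 Q
      = ∑ α ∈ Finset.range r, ∑ β ∈ Finset.range (r+1),
          (((r-1).choose α : ℝ) * (r.choose β : ℝ)) • E r β (α+1) := by
  have e1 : ((2:ℝ) ^ (r - 1)) • emb2 Q
      = ∑ α ∈ Finset.range r, ((r-1).choose α : ℝ) • emb2 (P ^ (r - (α+1)) * Q ^ (α+1)) := by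
    rw [← emb2_smul, hb1 r hr, map_sum]
    exact Finset.sum_congr rfl fun α _ => emb2_smul _ _
  have e2 : ((2:ℝ) ^ r) • (1:R2)
      = ∑ β ∈ Finset.range (r+1), (r.choose β : ℝ) • emb1 (P ^ (r - β) * Q ^ β) := by
    have := congrArg emb1 (hb2 r)
    rw [emb1_smul, map_one, map_sum] at this
    rw [this]
    exact Finset.sum_congr rfl fun β _ => emb1_smul _ _
  have key := congrArg₂ (· * ·) e1 e2
  simp only [smul_mul_smul_comm, mul_one] at key
  rw [← pow_add, show r - 1 + r = 2*r - 1 by omega] at key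
  rw [key, Finset.sum_mul_sum]
  refine Finset.sum_congr rfl fun α _ => Finset.sum_congr rfl fun β _ => ?_
  rw [smul_mul_smul_comm, E, mul_comm (emb1 _) (emb2 _)]

section Analytic
variable (N : ℕ) [NeZero N]

def phi (m : ℤ × ℤ) : ZMod N × ZMod N := ((m.1 : ZMod N), (m.2 : ZMod N))

lemma phi_add (m t : ℤ × ℤ) : phi N (m + t) = phi N m + phi N t := by
  simp [phi, Prod.ext_iff]

lemma phi_neg (m : ℤ × ℤ) : phi N (-m) = -(phi N m) := by
  simp [phi, Prod.ext_iff]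

lemma per_eq_sum (a : (ℤ × ℤ) →₀ ℝ) (k : ZMod N × ZMod N) :
    per N a k = a.sum fun m v => if phi N m = k then v else 0 := rfl

lemma per_add (a b : (ℤ × ℤ) →₀ ℝ) (k : ZMod N × ZMod N) :
    per N (a + b) k = per N a k + per N b k := by
  rw [per_eq_sum, per_eq_sum, per_eq_sum]
  exact Finsupp.sum_add_index' (fun m => ite_self 0)
    (fun m v w => by split <;> simp)

lemma per_eq_sum_over (a : (ℤ × ℤ) →₀ ℝ) (k : ZMod N × ZMod N) (s : Finset (ℤ × ℤ))
    (h : a.support ⊆ s) :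
    per N a k = ∑ m ∈ s, if phi N m = k then a m else 0 := by
  refine Finset.sum_subset h fun x _ hnx => ?_
  rw [Finsupp.notMem_support_iff.mp hnx]
  exact ite_self 0

lemma per_smul (c : ℝ) (a : (ℤ × ℤ) →₀ ℝ) (k : ZMod N × ZMod N) :
    per N (c • a) k = c * per N a k := by
  rw [per_eq_sum_over N (c • a) k a.support Finsupp.support_smul,
    per_eq_sum_over N a k a.support subset_rfl, Finset.mul_sum]
  refine Finset.sum_congr rfl fun m _ => ?_
  rw [Finsupp.smul_apply, smul_eq_mul, mul_ite, mul_zero]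

lemma per_single (m : ℤ × ℤ) (c : ℝ) (k : ZMod N × ZMod N) :
    per N (Finsupp.single m c) k = if phi N m = k then c else 0 := by
  rw [per_eq_sum]
  exact Finsupp.sum_single_index (ite_self 0)

lemma per_shift (a : (ℤ × ℤ) →₀ ℝ) (t : ℤ × ℤ) (k : ZMod N × ZMod N) :
    per N (Finsupp.mapDomain (· + t) a) k = per N a (k - phi N t) := by
  rw [per_eq_sum, per_eq_sum,
    Finsupp.sum_mapDomain_index_inj (add_left_injective t)]
  refine Finsupp.sum_congr fun m _ => ?_
  simp only [phi_add, eq_sub_iff_add_eq]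

variable (u : ZMod N × ZMod N → ℝ)

/-- `a ↦ a[−·] ⊛ u` as a linear map -/
def Lmap : ((ℤ × ℤ) →₀ ℝ) →ₗ[ℝ] ((ZMod N × ZMod N) → ℝ) where
  toFun a := pconv N (refl2 a) u
  map_add' a b := by
    funext k
    simp only [pconv, refl2, Finsupp.mapDomain_add, per_add, add_mul,
      Finset.sum_add_distrib, Pi.add_apply]
  map_smul' c a := by
    funext k
    simp only [pconv, refl2, Finsupp.mapDomain_smul, per_smul, RingHom.id_apply,
      Pi.smul_apply, smul_eq_mul, Finset.mul_sum, mul_assoc]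

lemma Lmap_apply (a : (ℤ × ℤ) →₀ ℝ) (k : ZMod N × ZMod N) :
    Lmap N u a k = pconv N (refl2 a) u k := rfl

lemma Lmap_single (m : ℤ × ℤ) (c : ℝ) (k : ZMod N × ZMod N) :
    Lmap N u (Finsupp.single m c) k = c * u (k + phi N m) := by
  rw [Lmap_apply, refl2, Finsupp.mapDomain_single, pconv]
  rw [Fintype.sum_equiv (Equiv.subLeft k)
    (fun n => per N (Finsupp.single (-m) c) (k - n) * u n)
    (fun x => per N (Finsupp.single (-m) c) x * u (k - x))
    (fun n => by simp only [Equiv.subLeft_apply, sub_sub_cancel])]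
  simp only [per_single, ite_mul, zero_mul]
  rw [Finset.sum_ite_eq Finset.univ (phi N (-m)) (fun x => c * u (k - x))]
  rw [if_pos (Finset.mem_univ _), phi_neg, sub_neg_eq_add]

/-- the ℓ¹ norm of the frame coefficients for a single filter -/
def Tn (a : (ℤ × ℤ) →₀ ℝ) : ℝ := ∑ k : ZMod N × ZMod N, |Lmap N u a k|

lemma Tn_nonneg (a : (ℤ × ℤ) →₀ ℝ) : 0 ≤ Tn N u a :=
  Finset.sum_nonneg fun k _ => abs_nonneg _

lemma Tn_smul (c : ℝ) (a : (ℤ × ℤ) →₀ ℝ) : Tn N u (c • a) = |c| * Tn N u a := by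
  rw [Tn, Tn, Finset.mul_sum]
  refine Finset.sum_congr rfl fun k _ => ?_
  rw [map_smul, Pi.smul_apply, smul_eq_mul, abs_mul]

lemma Tn_sum_le {ι : Type*} (s : Finset ι) (f : ι → ((ℤ × ℤ) →₀ ℝ)) :
    Tn N u (∑ i ∈ s, f i) ≤ ∑ i ∈ s, Tn N u (f i) := by
  rw [Tn]
  calc ∑ k : ZMod N × ZMod N, |Lmap N u (∑ i ∈ s, f i) k|
      ≤ ∑ k : ZMod N × ZMod N, ∑ i ∈ s, |Lmap N u (f i) k| := by
        refine Finset.sum_le_sum fun k _ => ?_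
        rw [map_sum]
        calc |(∑ i ∈ s, Lmap N u (f i)) k| = |∑ i ∈ s, Lmap N u (f i) k| := by
              rw [Finset.sum_apply]
          _ ≤ ∑ i ∈ s, |Lmap N u (f i) k| := Finset.abs_sum_le_sum_abs _ _
    _ = ∑ i ∈ s, Tn N u (f i) := Finset.sum_comm

lemma Lmap_shift (f : R2) (t : ℤ × ℤ) (k : ZMod N × ZMod N) :
    Lmap N u (f * AddMonoidAlgebra.single t 1).coeff k = Lmap N u f.coeff (k + phi N t) := by
  rw [Lmap_apply, Lmap_apply, mul_single_one]
  have h1 : refl2 (Finsupp.mapDomain (· + t) f.coeff) = Finsupp.mapDomain (· + (-t)) (refl2 f.coeff) := by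
    rw [refl2, refl2, ← Finsupp.mapDomain_comp, ← Finsupp.mapDomain_comp]
    congr 1
    funext x
    simp [Function.comp]
    abel
  rw [h1, pconv, pconv]
  refine Finset.sum_congr rfl fun n _ => ?_
  rw [per_shift, phi_neg, sub_neg_eq_add]
  congr 2
  abel

lemma Tn_shift (f : R2) (t : ℤ × ℤ) :
    Tn N u (f * AddMonoidAlgebra.single t 1).coeff = Tn N u f.coeff := by
  rw [Tn, Tn]
  refine Fintype.sum_equiv (Equiv.addRight (phi N t)) _ _ ?_
  intro k
  rw [Equiv.coe_addRight, Lmap_shift]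

end Analytic

section Main
variable (N : ℕ) [NeZero N] (u : ZMod N × ZMod N → ℝ)

lemma Q_eq : Q = AddMonoidAlgebra.single 0 1 - AddMonoidAlgebra.single 1 1 := rfl

lemma base1 :
    ∑ k : ZMod N × ZMod N, |u (k + ((1 : ZMod N), (0 : ZMod N))) - u k|
      = Tn N u (emb1 Q).coeff := by
  rw [Tn]
  refine Finset.sum_congr rfl fun k _ => ?_
  have hQ : (emb1 Q).coeff = Finsupp.single ((0:ℤ),(0:ℤ)) 1 - Finsupp.single ((1:ℤ),(0:ℤ)) 1 := by
    rw [Q_eq, map_sub, emb1_single, emb1_single]; rfl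
  have h : Lmap N u (emb1 Q).coeff k = u k - u (k + ((1:ZMod N), (0:ZMod N))) := by
    rw [hQ, map_sub, Pi.sub_apply, Lmap_single, Lmap_single]
    have h0 : phi N ((0:ℤ),(0:ℤ)) = 0 := by simp [phi, Prod.ext_iff]
    have h1 : phi N ((1:ℤ),(0:ℤ)) = ((1 : ZMod N), (0 : ZMod N)) := by
      simp [phi, Prod.ext_iff]
    rw [h0, h1, add_zero, one_mul, one_mul]
  rw [h, abs_sub_comm]

lemma base2 :
    ∑ k : ZMod N × ZMod N, |u (k + ((0 : ZMod N), (1 : ZMod N))) - u k|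
      = Tn N u (emb2 Q).coeff := by
  rw [Tn]
  refine Finset.sum_congr rfl fun k _ => ?_
  have hQ : (emb2 Q).coeff = Finsupp.single ((0:ℤ),(0:ℤ)) 1 - Finsupp.single ((0:ℤ),(1:ℤ)) 1 := by
    rw [Q_eq, map_sub, emb2_single, emb2_single]; rfl
  have h : Lmap N u (emb2 Q).coeff k = u k - u (k + ((0:ZMod N), (1:ZMod N))) := by
    rw [hQ, map_sub, Pi.sub_apply, Lmap_single, Lmap_single]
    have h0 : phi N ((0:ℤ),(0:ℤ)) = 0 := by simp [phi, Prod.ext_iff]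
    have h1 : phi N ((0:ℤ),(1:ℤ)) = ((0 : ZMod N), (1 : ZMod N)) := by
      simp [phi, Prod.ext_iff]
    rw [h0, h1, add_zero, one_mul, one_mul]
  rw [h, abs_sub_comm]

lemma Tn_E_eq (r γ δ : ℕ) :
    |cc r γ * cc r δ| * Tn N u (E r γ δ).coeff = Tn N u (a2 r (γ, δ)) := by
  rw [a2_eq, AddMonoidAlgebra.coeff_smul, Tn_smul, Tn_shift]

lemma choose_helper {r : ℕ} (hr : 1 ≤ r) (α : ℕ) : (r-1).choose α ≤ r.choose (α+1) := by
  obtain ⟨r', rfl⟩ : ∃ r', r = r' + 1 := ⟨r - 1, by omega⟩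
  rw [Nat.add_sub_cancel, Nat.choose_succ_succ]
  exact Nat.le_add_right _ _

lemma T1 (r γ δ c1 c2 : ℕ) (hr : 1 ≤ r) (h : c1 * c2 ≤ r.choose γ * r.choose δ) :
    ((c1 : ℝ) * (c2 : ℝ)) * Tn N u (E r γ δ).coeff
      ≤ (2:ℝ)^(2*r-1) * (3 * (Real.sqrt ((r.choose γ : ℝ) * (r.choose δ : ℝ))
          * Tn N u (a2 r (γ, δ)))) := by
  rw [← Tn_E_eq]
  set A : ℝ := (r.choose γ : ℝ) with hA
  set B : ℝ := (r.choose δ : ℝ) with hB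
  have hA0 : 0 ≤ A := Nat.cast_nonneg _
  have hB0 : 0 ≤ B := Nat.cast_nonneg _
  have habs : |cc r γ * cc r δ|
      = (2:ℝ)^(-(r:ℤ)) * Real.sqrt A * ((2:ℝ)^(-(r:ℤ)) * Real.sqrt B) := by
    rw [abs_mul, abs_cc, abs_cc]
  have hT := Tn_nonneg N u (E r γ δ).coeff
  have hrearr : (2:ℝ)^(2*r-1) * (3 * (Real.sqrt (A * B)
        * (|cc r γ * cc r δ| * Tn N u (E r γ δ).coeff)))
      = ((2:ℝ)^(2*r-1) * (3 * (Real.sqrt (A * B) * |cc r γ * cc r δ|)))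
        * Tn N u (E r γ δ).coeff := by ring
  rw [hrearr]
  refine mul_le_mul_of_nonneg_right ?_ hT
  have hz : ((2:ℝ)^(-(r:ℤ))) = ((2:ℝ)^r)⁻¹ := by
    rw [zpow_neg, zpow_natCast]
  have hsq : Real.sqrt (A*B) * ((2:ℝ)^(-(r:ℤ)) * Real.sqrt A * ((2:ℝ)^(-(r:ℤ)) * Real.sqrt B))
      = (A * B) * ((2:ℝ)^(-(r:ℤ)) * (2:ℝ)^(-(r:ℤ))) := by
    rw [Real.sqrt_mul hA0]
    have e1 : Real.sqrt A * Real.sqrt B * ((2:ℝ)^(-(r:ℤ)) * Real.sqrt A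
        * ((2:ℝ)^(-(r:ℤ)) * Real.sqrt B))
        = (Real.sqrt A * Real.sqrt A) * (Real.sqrt B * Real.sqrt B)
          * ((2:ℝ)^(-(r:ℤ)) * (2:ℝ)^(-(r:ℤ))) := by ring
    rw [e1, Real.mul_self_sqrt hA0, Real.mul_self_sqrt hB0]
  have hpow : (2:ℝ)^(2*r-1) * ((2:ℝ)^(-(r:ℤ)) * (2:ℝ)^(-(r:ℤ))) = 1/2 := by
    rw [hz]
    have h2 : (2:ℝ)^(2*r) = (2:ℝ)^(2*r-1) * 2 := by
      rw [← pow_succ]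
      congr 1
      omega
    have h3 : (2:ℝ)^r * (2:ℝ)^r = (2:ℝ)^(2*r) := by
      rw [← pow_add]
      congr 1
      omega
    field_simp
    nlinarith [h3, h2]
  calc (c1 : ℝ) * (c2 : ℝ) ≤ A * B := by
        rw [hA, hB]
        exact_mod_cast h
    _ ≤ (3 * (1/2)) * (A*B) := by nlinarith [mul_nonneg hA0 hB0]
    _ = (2:ℝ)^(2*r-1) * (3 * (Real.sqrt (A * B) * |cc r γ * cc r δ|)) := by
        rw [habs, hsq]
        rw [show (2:ℝ)^(2*r-1) * (3 * ((A*B) * ((2:ℝ)^(-(r:ℤ)) * (2:ℝ)^(-(r:ℤ)))))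
            = 3 * ((A*B)) * ((2:ℝ)^(2*r-1) * ((2:ℝ)^(-(r:ℤ)) * (2:ℝ)^(-(r:ℤ)))) by ring,
          hpow]
        ring

/-- the per-band weight -/
def gg (r : ℕ) (p : ℕ × ℕ) : ℝ :=
  3 * (Real.sqrt ((r.choose p.1 : ℝ) * (r.choose p.2 : ℝ)) * Tn N u (a2 r p))

lemma gg_nonneg (r : ℕ) (p : ℕ × ℕ) : 0 ≤ gg N u r p :=
  mul_nonneg (by norm_num)
    (mul_nonneg (Real.sqrt_nonneg _) (Tn_nonneg N u (a2 r p)))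

lemma sum_to_band (r : ℕ) (ι : ℕ × ℕ → ℕ × ℕ)
    (hinj : ∀ p ∈ Finset.range r ×ˢ Finset.range (r+1),
      ∀ q ∈ Finset.range r ×ˢ Finset.range (r+1), ι p = ι q → p = q)
    (hsub : ∀ p ∈ Finset.range r ×ˢ Finset.range (r+1), ι p ∈ Band r) :
    ∑ α ∈ Finset.range r, ∑ β ∈ Finset.range (r+1), gg N u r (ι (α, β))
      ≤ ∑ p ∈ Band r, gg N u r p := by
  rw [← Finset.sum_product']
  rw [Finset.sum_congr rfl (fun (x : ℕ × ℕ) _ => by rw [Prod.mk.eta] :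
    ∀ x ∈ Finset.range r ×ˢ Finset.range (r+1),
      gg N u r (ι (x.1, x.2)) = gg N u r (ι x))]
  calc ∑ x ∈ Finset.range r ×ˢ Finset.range (r+1), gg N u r (ι x)
      = ∑ x ∈ (Finset.range r ×ˢ Finset.range (r+1)).image ι, gg N u r x :=
        (Finset.sum_image hinj).symm
    _ ≤ ∑ p ∈ Band r, gg N u r p := by
        refine Finset.sum_le_sum_of_subset_of_nonneg ?_ (fun p _ _ => gg_nonneg N u r p)
        intro q hq
        rw [Finset.mem_image] at hq
        obtain ⟨p, hp, rfl⟩ := hq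
        exact hsub p hp

lemma half1 (r : ℕ) (hr : 1 ≤ r) :
    Tn N u (emb1 Q).coeff ≤ ∑ p ∈ Band r, gg N u r p := by
  have hpos : (0:ℝ) < 2^(2*r-1) := by positivity
  refine le_of_mul_le_mul_left ?_ hpos
  calc (2:ℝ)^(2*r-1) * Tn N u (emb1 Q).coeff
      = Tn N u (((2:ℝ)^(2*r-1)) • emb1 Q).coeff := by
        rw [AddMonoidAlgebra.coeff_smul, Tn_smul, abs_of_pos hpos]
    _ = Tn N u (∑ α ∈ Finset.range r, ∑ β ∈ Finset.range (r+1),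
          (((r-1).choose α : ℝ) * (r.choose β : ℝ)) • E r (α+1) β).coeff := by
        rw [ident1 r hr]
    _ ≤ ∑ α ∈ Finset.range r, Tn N u (∑ β ∈ Finset.range (r+1),
          (((r-1).choose α : ℝ) * (r.choose β : ℝ)) • E r (α+1) β).coeff := by
        rw [AddMonoidAlgebra.coeff_sum]; exact Tn_sum_le N u _ _
    _ ≤ ∑ α ∈ Finset.range r, ∑ β ∈ Finset.range (r+1),
          Tn N u ((((r-1).choose α : ℝ) * (r.choose β : ℝ)) • E r (α+1) β).coeff :=
        Finset.sum_le_sum fun α _ => by rw [AddMonoidAlgebra.coeff_sum]; exact Tn_sum_le N u _ _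
    _ ≤ ∑ α ∈ Finset.range r, ∑ β ∈ Finset.range (r+1),
          (2:ℝ)^(2*r-1) * gg N u r (α+1, β) := by
        refine Finset.sum_le_sum fun α _ => Finset.sum_le_sum fun β _ => ?_
        rw [AddMonoidAlgebra.coeff_smul, Tn_smul, abs_of_nonneg (by positivity : (0:ℝ) ≤ ((r-1).choose α : ℝ) * (r.choose β : ℝ))]
        exact T1 N u r (α+1) β _ _ hr
          (Nat.mul_le_mul_right _ (choose_helper hr α))
    _ = (2:ℝ)^(2*r-1) * ∑ α ∈ Finset.range r, ∑ β ∈ Finset.range (r+1),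
          gg N u r (α+1, β) := by
        rw [Finset.mul_sum]
        exact Finset.sum_congr rfl fun α _ => by rw [Finset.mul_sum]
    _ ≤ (2:ℝ)^(2*r-1) * ∑ p ∈ Band r, gg N u r p := by
        refine mul_le_mul_of_nonneg_left ?_ (le_of_lt hpos)
        refine sum_to_band N u r (fun p => (p.1+1, p.2)) ?_ ?_
        · intro p _ q _ h
          simpa [Prod.ext_iff] using h
        · intro p hp
          simp only [Finset.mem_product, Finset.mem_range] at hp
          simp only [Band, Finset.mem_erase, Finset.mem_product, Finset.mem_range]
          refine ⟨by simp [Prod.ext_iff], by omega, by omega⟩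

lemma half2 (r : ℕ) (hr : 1 ≤ r) :
    Tn N u (emb2 Q).coeff ≤ ∑ p ∈ Band r, gg N u r p := by
  have hpos : (0:ℝ) < 2^(2*r-1) := by positivity
  refine le_of_mul_le_mul_left ?_ hpos
  calc (2:ℝ)^(2*r-1) * Tn N u (emb2 Q).coeff
      = Tn N u (((2:ℝ)^(2*r-1)) • emb2 Q).coeff := by
        rw [AddMonoidAlgebra.coeff_smul, Tn_smul, abs_of_pos hpos]
    _ = Tn N u (∑ α ∈ Finset.range r, ∑ β ∈ Finset.range (r+1),
          (((r-1).choose α : ℝ) * (r.choose β : ℝ)) • E r β (α+1)).coeff := by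
        rw [ident2 r hr]
    _ ≤ ∑ α ∈ Finset.range r, Tn N u (∑ β ∈ Finset.range (r+1),
          (((r-1).choose α : ℝ) * (r.choose β : ℝ)) • E r β (α+1)).coeff := by
        rw [AddMonoidAlgebra.coeff_sum]; exact Tn_sum_le N u _ _
    _ ≤ ∑ α ∈ Finset.range r, ∑ β ∈ Finset.range (r+1),
          Tn N u ((((r-1).choose α : ℝ) * (r.choose β : ℝ)) • E r β (α+1)).coeff :=
        Finset.sum_le_sum fun α _ => by rw [AddMonoidAlgebra.coeff_sum]; exact Tn_sum_le N u _ _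
    _ ≤ ∑ α ∈ Finset.range r, ∑ β ∈ Finset.range (r+1),
          (2:ℝ)^(2*r-1) * gg N u r (β, α+1) := by
        refine Finset.sum_le_sum fun α _ => Finset.sum_le_sum fun β _ => ?_
        rw [AddMonoidAlgebra.coeff_smul, Tn_smul, abs_of_nonneg (by positivity : (0:ℝ) ≤ ((r-1).choose α : ℝ) * (r.choose β : ℝ))]
        exact T1 N u r β (α+1) _ _ hr
          (by rw [mul_comm (r.choose β)]
              exact Nat.mul_le_mul_right _ (choose_helper hr α))
    _ = (2:ℝ)^(2*r-1) * ∑ α ∈ Finset.range r, ∑ β ∈ Finset.range (r+1),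
          gg N u r (β, α+1) := by
        rw [Finset.mul_sum]
        exact Finset.sum_congr rfl fun α _ => by rw [Finset.mul_sum]
    _ ≤ (2:ℝ)^(2*r-1) * ∑ p ∈ Band r, gg N u r p := by
        refine mul_le_mul_of_nonneg_left ?_ (le_of_lt hpos)
        refine sum_to_band N u r (fun p => (p.2, p.1+1)) ?_ ?_
        · intro p _ q _ h
          simp only [Prod.ext_iff] at h ⊢
          omega
        · intro p hp
          simp only [Finset.mem_product, Finset.mem_range] at hp
          simp only [Band, Finset.mem_erase, Finset.mem_product, Finset.mem_range]
          refine ⟨by simp [Prod.ext_iff], by omega, by omega⟩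

end Main



/-- periodic total variation bound by single-level wavelet frame
coefficients: Σ_k |u[k+e₁]−u[k]| + Σ_k |u[k+e₂]−u[k]|
  ≤ 6 Σ_{α∈B} √(C(r,α₁)C(r,α₂)) Σ_k |(a_α[−·] ⊛ u)[k]|  (indices mod N). -/
theorem stmt4 (N : ℕ) (hN : 2 ≤ N) [NeZero N] (r : ℕ) (hr : 1 ≤ r)
    (u : ZMod N × ZMod N → ℝ) :
    (∑ k : ZMod N × ZMod N, |u (k + ((1 : ZMod N), (0 : ZMod N))) - u k|) +
      (∑ k : ZMod N × ZMod N, |u (k + ((0 : ZMod N), (1 : ZMod N))) - u k|) ≤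
    6 * ∑ α ∈ Band r, Real.sqrt ((r.choose α.1 : ℝ) * (r.choose α.2 : ℝ)) *
      ∑ k : ZMod N × ZMod N, |pconv N (refl2 (a2 r α)) u k| := by
  rw [base1 N u, base2 N u]
  have h1 := half1 N u r hr
  have h2 := half2 N u r hr
  calc Tn N u (emb1 Q).coeff + Tn N u (emb2 Q).coeff
      ≤ (∑ p ∈ Band r, gg N u r p) + (∑ p ∈ Band r, gg N u r p) := add_le_add h1 h2
    _ = 6 * ∑ α ∈ Band r, Real.sqrt ((r.choose α.1 : ℝ) * (r.choose α.2 : ℝ)) *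
          ∑ k : ZMod N × ZMod N, |pconv N (refl2 (a2 r α)) u k| := by
        rw [← Finset.sum_add_distrib, Finset.mul_sum]
        refine Finset.sum_congr rfl fun p _ => ?_
        have : (∑ k : ZMod N × ZMod N, |pconv N (refl2 (a2 r p)) u k|) = Tn N u (a2 r p) := rfl
        rw [this, gg]
        ring


end WFrame
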